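/- Let n ≥ 5 be an odd integer with gcd(n, F_n) = 1, where F_n is the n-th Fibonacci number. Then the critical group of the circulant graph C_n^{1,2} satisfies K(C_n^{1,2}) ≅ (ℤ/F_nℤ) × (ℤ/F_nℤ) × (ℤ/nℤ). -/

import Mathlib

open scoped BigOperators

/-- The column of the Laplacian of the circulant graph C_n^{1,2} at vertex `v`:
value −4 at `v`, value 1 at each of its neighbors `v ± 1, v ± 2`, and 0 elsewhere. -/
def circLap (n : ℕ) [NeZero n] (v u : ZMod n) : ℤ :=
  if u = v then -4
  else if u - v = 1 ∨ u - v = -1 ∨ u - v = 2 ∨ u - v = -2 then 1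
  else 0

/-- The group of degree-zero divisors on C_n^{1,2}. -/
def circD (n : ℕ) [NeZero n] : AddSubgroup (ZMod n → ℤ) where
  carrier := {δ | ∑ v, δ v = 0}
  zero_mem' := by simp
  add_mem' := by
    intro a b ha hb
    simp only [Set.mem_setOf_eq, Pi.add_apply, Finset.sum_add_distrib] at *
    simp [ha, hb]
  neg_mem' := by
    intro a ha
    simp only [Set.mem_setOf_eq, Pi.neg_apply, Finset.sum_neg_distrib] at *
    simp [ha]

/-- The critical group (Jacobian) of the circulant graph C_n^{1,2}: degree-zero divisors
modulo the subgroup generated by the columns of the Laplacian. -/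
abbrev circK (n : ℕ) [NeZero n] :=
  circD n ⧸ ((AddSubgroup.closure (Set.range (circLap n))).addSubgroupOf (circD n))


open Polynomial

namespace CircAux

/-- r = X² + 3X + 1 -/
noncomputable def rr : ℤ[X] := X^2 + 3*X + 1

/-- s_n = 1 + X + ... + X^{n-1} -/
noncomputable def ss (n : ℕ) : ℤ[X] := ∑ i ∈ Finset.range n, X^i

noncomputable def fI (k : ℕ) : ℤ[X] := C (Nat.fib k : ℤ)

lemma fI_add_two (k : ℕ) : fI (k+2) = fI k + fI (k+1) := by
  simp only [fI, Nat.fib_add_two]; push_cast; rw [map_add]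

/-- companion congruence: X^{k+1} ≡ F_{k+2}(X+1)^{k+1} − F_{k+1}(X+1)^k  (mod r) -/
lemma pow_cong (k : ℕ) : ∃ h : ℤ[X],
    X^(k+1) = fI (k+2) * (X+1)^(k+1) - fI (k+1) * (X+1)^k + rr * h := by
  induction k with
  | zero =>
    refine ⟨0, ?_⟩
    have h1 : fI 1 = 1 := by simp [fI]
    have h2 : fI 2 = 1 := by simp [fI]
    rw [h1, h2]; ring
  | succ k ih =>
    obtain ⟨h, H⟩ := ih
    refine ⟨X * h - fI (k+1) * (X+1)^k, ?_⟩
    have hf : fI (k+3) = fI (k+1) + fI (k+2) := by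
      have h := fI_add_two (k+1)
      have e1 : k+1+2 = k+3 := by omega
      have e2 : k+1+1 = k+2 := by omega
      rwa [e1, e2] at h
    calc X^(k+2) = X * X^(k+1) := by ring
      _ = X * (fI (k+2) * (X+1)^(k+1) - fI (k+1) * (X+1)^k + rr * h) := by rw [H]
      _ = fI (k+3) * (X+1)^(k+2) - fI (k+2) * (X+1)^(k+1)
            + rr * (X * h - fI (k+1) * (X+1)^k) := by
          rw [hf]; unfold rr; ring

/-- s_{k+1} ≡ F_{k+1}(X+1)^k  (mod r) -/
lemma ss_cong (k : ℕ) : ∃ g : ℤ[X], ss (k+1) = fI (k+1) * (X+1)^k + rr * g := by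
  induction k with
  | zero =>
    refine ⟨0, ?_⟩
    have h1 : fI 1 = 1 := by simp [fI]
    simp [ss, h1]
  | succ k ih =>
    obtain ⟨g, hg⟩ := ih
    obtain ⟨h, hh⟩ := pow_cong k
    refine ⟨g + h, ?_⟩
    rw [ss, Finset.sum_range_succ, ← ss, hg, hh]; ring

lemma ss_cong' (n : ℕ) (hn : 1 ≤ n) :
    ∃ g : ℤ[X], ss n = fI n * (X+1)^(n-1) + rr * g := by
  obtain ⟨k, rfl⟩ : ∃ k, n = k + 1 := ⟨n - 1, by omega⟩
  simpa using ss_cong k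

lemma one_add_rr_pow (m : ℕ) : ∃ e : ℤ[X], (1 + rr)^m = 1 + rr * e := by
  induction m with
  | zero => exact ⟨0, by ring⟩
  | succ m ih =>
    obtain ⟨e, he⟩ := ih
    exact ⟨e + rr*e + 1, by rw [pow_succ, he]; unfold rr; ring⟩

lemma ss_eval_one (n : ℕ) : (ss n).eval 1 = n := by
  simp [ss, eval_geom_sum]

lemma ss_sub_C (n : ℕ) : ∃ w : ℤ[X], ss n = C (n:ℤ) + (X - 1) * w := by
  have h : (X - C (1:ℤ)) ∣ (ss n - C (n:ℤ)) := by
    rw [dvd_iff_isRoot]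
    simp [IsRoot, ss_eval_one]
  obtain ⟨w, hw⟩ := h
  exact ⟨w, by rw [map_one] at hw; linear_combination hw⟩

/-- the key ideal in ℤ[X] -/
noncomputable def Jid (n : ℕ) : Ideal ℤ[X] := Ideal.span {(X-1) * rr, ss n}
noncomputable def P1 (n : ℕ) : Ideal ℤ[X] := Ideal.span {rr, C (Nat.fib n : ℤ)}
noncomputable def P2 (n : ℕ) : Ideal ℤ[X] := Ideal.span {X - 1, C (n : ℤ)}

lemma CF_mem (n : ℕ) (hn : 1 ≤ n) : fI n ∈ Ideal.span {rr, ss n} := by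
  obtain ⟨g, hg⟩ := ss_cong' n hn
  obtain ⟨e, he⟩ := one_add_rr_pow (n-1)
  have hfac : ((X:ℤ[X])+1)^(n-1) * (X+2)^(n-1) = 1 + rr * e := by
    rw [← mul_pow, ← he]; congr 1; unfold rr; ring
  refine Ideal.mem_span_pair.2 ⟨-((X+2)^(n-1) * g) - fI n * e, (X+2)^(n-1), ?_⟩
  have := congrArg (fun p => (X+2)^(n-1) * p) hg
  -- (X+2)^{n-1} * ss n = fI n * ((X+1)^{n-1}(X+2)^{n-1}) + rr * ((X+2)^{n-1} g)
  -- = fI n (1 + rr e) + rr (...)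
  have h2 : (X+2)^(n-1) * ss n = fI n * (1 + rr * e) + rr * ((X+2)^(n-1) * g) := by
    rw [this, ← hfac]; ring
  linear_combination h2

lemma P1_eq (n : ℕ) (hn : 1 ≤ n) : P1 n = Ideal.span {rr, ss n} := by
  apply le_antisymm
  · rw [P1, Ideal.span_le]
    rintro x hx
    rcases hx with h | h
    · subst h; exact Ideal.subset_span (by left; rfl)
    · simp only [Set.mem_singleton_iff] at h; subst h
      exact CF_mem n hn
  · rw [Ideal.span_le]
    rintro x hx
    rcases hx with h | h
    · subst h; exact Ideal.subset_span (by left; rfl)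
    · simp only [Set.mem_singleton_iff] at h; subst h
      obtain ⟨g, hg⟩ := ss_cong' n hn
      exact Ideal.mem_span_pair.2 ⟨g, (X+1)^(n-1), by rw [← fI]; linear_combination -hg⟩


lemma P2_eq (n : ℕ) : P2 n = Ideal.span {X - 1, ss n} := by
  obtain ⟨w, hw⟩ := ss_sub_C n
  apply le_antisymm
  · rw [P2, Ideal.span_le]
    rintro x hx
    rcases hx with h | h
    · subst h; exact Ideal.subset_span (by left; rfl)
    · simp only [Set.mem_singleton_iff] at h; subst h
      exact Ideal.mem_span_pair.2 ⟨-w, 1, by linear_combination hw⟩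
  · rw [Ideal.span_le]
    rintro x hx
    rcases hx with h | h
    · subst h; exact Ideal.subset_span (by left; rfl)
    · simp only [Set.mem_singleton_iff] at h; subst h
      exact Ideal.mem_span_pair.2 ⟨w, 1, by linear_combination -hw⟩

lemma coprimality (n : ℕ) (hgcd : Nat.gcd n (Nat.fib n) = 1) : P1 n ⊔ P2 n = ⊤ := by
  rw [Ideal.eq_top_iff_one]
  have hb : (1:ℤ) = (n:ℤ) * Int.gcdA n (Nat.fib n) + (Nat.fib n : ℤ) * Int.gcdB n (Nat.fib n) := by
    have := Int.gcd_eq_gcd_ab (n : ℤ) (Nat.fib n : ℤ)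
    rw [Int.gcd_natCast_natCast, hgcd] at this
    exact_mod_cast this
  have h1 : (C ((Nat.fib n : ℤ) * Int.gcdB n (Nat.fib n)) : ℤ[X]) ∈ P1 n :=
    Ideal.mem_span_pair.2 ⟨0, C (Int.gcdB n (Nat.fib n)), by rw [map_mul]; ring⟩
  have h2 : (C ((n:ℤ) * Int.gcdA n (Nat.fib n)) : ℤ[X]) ∈ P2 n :=
    Ideal.mem_span_pair.2 ⟨0, C (Int.gcdA n (Nat.fib n)), by rw [map_mul]; ring⟩
  have : (1 : ℤ[X]) = C ((n:ℤ) * Int.gcdA n (Nat.fib n)) + C ((Nat.fib n : ℤ) * Int.gcdB n (Nat.fib n)) := by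
    rw [← map_add, ← hb, map_one]
  rw [this]
  exact add_mem (Submodule.mem_sup_right h2) (Submodule.mem_sup_left h1)

lemma J_le_P1 (n : ℕ) (hn : 1 ≤ n) : Jid n ≤ P1 n := by
  rw [Jid, Ideal.span_le, P1_eq n hn]
  rintro x hx
  rcases hx with h | h
  · subst h; exact Ideal.mem_span_pair.2 ⟨X - 1, 0, by ring⟩
  · simp only [Set.mem_singleton_iff] at h; subst h
    exact Ideal.subset_span (by right; rfl)

lemma J_le_P2 (n : ℕ) : Jid n ≤ P2 n := by
  rw [Jid, Ideal.span_le, P2_eq n]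
  rintro x hx
  rcases hx with h | h
  · subst h; exact Ideal.mem_span_pair.2 ⟨rr, 0, by ring⟩
  · simp only [Set.mem_singleton_iff] at h; subst h
    exact Ideal.subset_span (by right; rfl)

lemma J_eq (n : ℕ) (hn : 1 ≤ n) (hgcd : Nat.gcd n (Nat.fib n) = 1) :
    Jid n = P1 n ⊓ P2 n := by
  apply le_antisymm (le_inf (J_le_P1 n hn) (J_le_P2 n))
  rw [← Ideal.mul_eq_inf_of_coprime (coprimality n hgcd), P1_eq n hn, P2_eq n,
    Ideal.span_mul_span, Ideal.span_le]
  rintro x hx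
  simp only [Set.mem_mul, Set.mem_insert_iff, Set.mem_singleton_iff] at hx
  obtain ⟨a, ha, b, hb, hab⟩ := hx
  subst hab
  have hss : ss n ∈ Jid n := Ideal.subset_span (by right; rfl)
  have hxr : (X - 1) * rr ∈ Jid n := Ideal.subset_span (by left; rfl)
  rcases ha with ha | ha <;> rcases hb with hb | hb <;> subst ha <;> subst hb
  · -- rr * (X-1)
    have : rr * (X - 1) = (X-1) * rr := by ring
    rw [this]; exact hxr
  · -- rr * ss n
    exact (Jid n).mul_mem_left rr hss
  · -- ss n * (X - 1)
    exact (Jid n).mul_mem_right (X-1) hss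
  · exact (Jid n).mul_mem_right (ss n) hss

section Components

variable (F : ℕ) [NeZero F]

noncomputable def rrF : (ZMod F)[X] := X^2 + 3*X + 1

lemma rrF_monic : (rrF F).Monic := by
  unfold rrF; monicity!

noncomputable def redF : ℤ[X] → (ZMod F)[X] := Polynomial.map (Int.castRingHom (ZMod F))

lemma redF_rr : redF F rr = rrF F := by
  unfold redF rr rrF
  simp [Polynomial.map_add, Polynomial.map_mul, Polynomial.map_pow, Polynomial.map_ofNat]

lemma redF_zero_iff (g : ℤ[X]) : redF F g = 0 ↔ (C (F:ℤ)) ∣ g := by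
  rw [C_dvd_iff_dvd_coeff]
  constructor
  · intro h i
    have := congrArg (fun p => Polynomial.coeff p i) h
    simp only [redF, Polynomial.coeff_map, Polynomial.coeff_zero] at this
    exact_mod_cast (ZMod.intCast_zmod_eq_zero_iff_dvd _ F).1 this
  · intro h
    ext i
    simp only [redF, Polynomial.coeff_map, Polynomial.coeff_zero]
    exact (ZMod.intCast_zmod_eq_zero_iff_dvd _ F).2 (h i)

lemma memP1_iff (f : ℤ[X]) :
    (redF F f) %ₘ (rrF F) = 0 ↔ f ∈ Ideal.span {rr, C (F:ℤ)} := by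
  rw [Polynomial.modByMonic_eq_zero_iff_dvd (rrF_monic F)]
  constructor
  · rintro ⟨w, hw⟩
    obtain ⟨w', hw'⟩ := Polynomial.map_surjective (Int.castRingHom (ZMod F))
      ZMod.intCast_surjective w
    have hz : redF F (f - rr * w') = 0 := by
      unfold redF
      rw [Polynomial.map_sub, Polynomial.map_mul, hw']
      have h2 : Polynomial.map (Int.castRingHom (ZMod F)) rr = rrF F := redF_rr F
      have h3 : Polynomial.map (Int.castRingHom (ZMod F)) f = rrF F * w := hw
      rw [h2, h3, sub_self]
    obtain ⟨m, hm⟩ := (redF_zero_iff F _).1 hz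
    exact Ideal.mem_span_pair.2 ⟨w', m, by linear_combination -hm⟩
  · intro hf
    obtain ⟨a, b, hab⟩ := Ideal.mem_span_pair.1 hf
    refine ⟨redF F a, ?_⟩
    have : redF F f = redF F a * rrF F + redF F b * redF F (C (F:ℤ)) := by
      rw [← redF_rr F, ← hab]; unfold redF
      simp [Polynomial.map_add, Polynomial.map_mul]
    rw [this]
    have hC : redF F (C (F:ℤ)) = 0 := by
      unfold redF; simp [Polynomial.map_C, ZMod.natCast_self]
    rw [hC, mul_zero, add_zero, mul_comm]

end Components

lemma memP2_iff (n : ℕ) [NeZero n] (f : ℤ[X]) :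
    ((f.eval 1 : ℤ) : ZMod n) = 0 ↔ f ∈ P2 n := by
  rw [ZMod.intCast_zmod_eq_zero_iff_dvd]
  constructor
  · rintro ⟨m, hm⟩
    have h : (X - C (1:ℤ)) ∣ (f - C (f.eval 1)) := by
      rw [dvd_iff_isRoot]; simp [IsRoot]
    obtain ⟨w, hw⟩ := h
    refine Ideal.mem_span_pair.2 ⟨w, C m, ?_⟩
    rw [map_one] at hw
    have : (C (f.eval 1) : ℤ[X]) = C ((n:ℤ) * m) := by rw [hm]
    rw [map_mul] at this
    linear_combination -hw - this
  · intro hf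
    obtain ⟨a, b, hab⟩ := Ideal.mem_span_pair.1 hf
    refine ⟨b.eval 1, ?_⟩
    have := congrArg (fun p => Polynomial.eval 1 p) hab
    simp only [eval_add, eval_mul, eval_sub, eval_X, eval_one, eval_C, sub_self,
      mul_zero, zero_add] at this
    rw [← this]; ring


section Wside

variable (n : ℕ) [NeZero n]

/-- group algebra -/
abbrev Wn := AddMonoidAlgebra ℤ (ZMod n)

noncomputable def eF : Wn n ≃+ (ZMod n → ℤ) :=
  AddMonoidAlgebra.coeffAddEquiv.trans Finsupp.addEquivFunOnFinite

noncomputable def uu : Wn n := AddMonoidAlgebra.single (1 : ZMod n) (1 : ℤ)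

lemma uu_pow (k : ℕ) : (uu n) ^ k = AddMonoidAlgebra.single ((k : ZMod n)) (1 : ℤ) := by
  rw [uu, AddMonoidAlgebra.single_pow]
  congr 1
  · simp
  · simp

noncomputable def piW : ℤ[X] →ₐ[ℤ] Wn n := Polynomial.aeval (uu n)

lemma eF_single (a : ZMod n) (b : ℤ) (u : ZMod n) :
    eF n (AddMonoidAlgebra.single a b) u = if a = u then b else 0 := by
  show (Finsupp.single a b) u = _
  exact Finsupp.single_apply

lemma piW_C (a : ℤ) : piW n (C a) = AddMonoidAlgebra.single (0 : ZMod n) a := by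
  rw [piW, aeval_C, eq_intCast, ← eq_intCast (Int.castRingHom (Wn n))]
  have h1 : (Int.castRingHom (Wn n)) a = a • (1 : Wn n) := by rw [zsmul_one]; rfl
  rw [h1, AddMonoidAlgebra.one_def]
  rw [AddMonoidAlgebra.smul_single, smul_eq_mul, mul_one]

lemma piW_X_pow (k : ℕ) : piW n (X ^ k) = AddMonoidAlgebra.single ((k : ZMod n)) (1 : ℤ) := by
  rw [piW, map_pow, aeval_X, uu_pow]

lemma piW_monomial (k : ℕ) (a : ℤ) :
    piW n (monomial k a) = AddMonoidAlgebra.single ((k : ZMod n)) a := by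
  have : (monomial k a : ℤ[X]) = C a * X ^ k := by rw [C_mul_X_pow_eq_monomial]
  rw [this, map_mul, piW_C, piW_X_pow, AddMonoidAlgebra.single_mul_single]
  simp

lemma sum_eF_piW (f : ℤ[X]) : ∑ w, eF n (piW n f) w = f.eval 1 := by
  induction f using Polynomial.induction_on' with
  | add p q hp hq =>
    rw [map_add, map_add, eval_add, ← hp, ← hq, ← Finset.sum_add_distrib]
    rfl
  | monomial k a =>
    rw [piW_monomial, eval_monomial, one_pow, mul_one]
    have : ∀ w : ZMod n, eF n (AddMonoidAlgebra.single ((k : ZMod n)) a) w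
        = if (k : ZMod n) = w then a else 0 := by
      intro w; exact Finsupp.single_apply
    simp only [this]
    rw [Finset.sum_ite_eq Finset.univ ((k : ZMod n)) (fun _ => a)]
    simp

/-- the polynomial with coefficients given by δ -/
noncomputable def polyOf (δ : ZMod n → ℤ) : ℤ[X] := ∑ i ∈ Finset.range n, C (δ (i : ZMod n)) * X^i

lemma eF_piW_polyOf (δ : ZMod n → ℤ) : eF n (piW n (polyOf n δ)) = δ := by
  funext w
  rw [polyOf, map_sum, map_sum]
  have hterm : ∀ i : ℕ, piW n (C (δ (i : ZMod n)) * X^i)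
      = AddMonoidAlgebra.single ((i : ZMod n)) (δ (i : ZMod n)) := by
    intro i
    rw [map_mul, piW_C, piW_X_pow, AddMonoidAlgebra.single_mul_single]
    simp
  simp only [hterm]
  rw [Finset.sum_apply]
  simp only [eF_single]
  rw [Finset.sum_eq_single w.val]
  · rw [ZMod.natCast_rightInverse w, if_pos rfl]
  · intro i hi hne
    have hlt : i < n := Finset.mem_range.1 hi
    rw [if_neg]
    intro hc
    apply hne
    have := congrArg ZMod.val hc
    rwa [ZMod.val_cast_of_lt hlt] at this
  · intro hw
    exact absurd (Finset.mem_range.2 (ZMod.val_lt w)) hw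

lemma piW_surjective : Function.Surjective (piW n) := by
  intro a
  refine ⟨polyOf n (eF n a), (eF n).injective ?_⟩
  rw [eF_piW_polyOf]

lemma piW_Xn_sub_one : piW n (X^n - 1) = 0 := by
  rw [map_sub, map_one, piW_X_pow, ZMod.natCast_self, AddMonoidAlgebra.one_def, sub_self]

lemma small_eq_zero (f : ℤ[X]) (hd : f.natDegree < n) (h : piW n f = 0) : f = 0 := by
  have h2 : (0 : ZMod n → ℤ) = eF n (Polynomial.aeval (uu n) f) := by
    rw [show (Polynomial.aeval (uu n) f : Wn n) = piW n f from rfl, h, map_zero]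
  rw [aeval_eq_sum_range, map_sum] at h2
  ext k
  rw [coeff_zero]
  by_cases hk : k < n
  · have h3 := congrFun h2 ((k : ZMod n))
    rw [Finset.sum_apply] at h3
    have hterm : ∀ i : ℕ, ((eF n) (f.coeff i • uu n ^ i)) ((k:ZMod n))
        = (if (i : ZMod n) = (k : ZMod n) then f.coeff i else 0) := by
      intro i
      rw [uu_pow, map_zsmul, Pi.smul_apply, eF_single, smul_eq_mul]
      split <;> simp
    simp only [hterm] at h3
    by_cases hkd : k ∈ Finset.range (f.natDegree + 1)
    · rw [Finset.sum_eq_single k] at h3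
      · rw [if_pos rfl] at h3; exact h3.symm
      · intro i hi hne
        rw [if_neg]
        intro hc
        apply hne
        have hi' : i < n := by have := Finset.mem_range.1 hi; omega
        have := congrArg ZMod.val hc
        rwa [ZMod.val_cast_of_lt hi', ZMod.val_cast_of_lt hk] at this
      · intro hkk; exact absurd hkd hkk
    · exact coeff_eq_zero_of_natDegree_lt (by have := Finset.mem_range.not.1 hkd; omega)
  · exact coeff_eq_zero_of_natDegree_lt (by omega)

lemma ker_piW (f : ℤ[X]) : piW n f = 0 ↔ f ∈ Ideal.span {X^n - (1:ℤ[X])} := by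
  constructor
  · intro h
    have hmon : (X^n - C (1:ℤ)).Monic := monic_X_pow_sub_C 1 (NeZero.ne n)
    have hdiv := Polynomial.modByMonic_add_div f (X^n - C (1:ℤ))
    have hC1 : (X^n - C (1:ℤ)) = X^n - 1 := by rw [map_one]
    set f0 := f %ₘ (X^n - C (1:ℤ)) with hf0
    have hpif0 : piW n f0 = 0 := by
      have : piW n f = piW n f0 + piW n (X^n - C 1) * piW n (f /ₘ (X^n - C 1)) := by
        rw [← map_mul, ← map_add, hdiv]
      rw [h, hC1, piW_Xn_sub_one, zero_mul, add_zero] at this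
      exact this.symm
    have hdeg : f0.degree < (X^n - C (1:ℤ)).degree := degree_modByMonic_lt f hmon
    rw [degree_X_pow_sub_C (Nat.pos_of_ne_zero (NeZero.ne n))] at hdeg
    have hf00 : f0 = 0 := by
      by_cases h0 : f0 = 0
      · exact h0
      · exact small_eq_zero n f0 ((natDegree_lt_iff_degree_lt h0).2 hdeg) hpif0
    have hfe : f = (X^n - C 1) * (f /ₘ (X^n - C 1)) := by
      conv_lhs => rw [← hdiv]
      rw [hf00, zero_add]
    rw [hC1] at hfe
    rw [Ideal.mem_span_singleton]
    exact ⟨f /ₘ (X^n - C 1), hfe⟩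
  · intro h
    obtain ⟨g, hg⟩ := Ideal.mem_span_singleton.1 h
    rw [hg, map_mul, piW_Xn_sub_one, zero_mul]

end Wside


section Structure

variable (n : ℕ) [NeZero n]

noncomputable def gam (n : ℕ) : ℤ[X] := C (-4) + X + X^2 + X^(n-1) + X^(n-2)

noncomputable def cW : Wn n := piW n (gam n)

lemma I1 (hn5 : 5 ≤ n) :
    (X:ℤ[X])^2 * gam n = (X-1)^2 * rr + (X^n - 1) * (X + 1) := by
  obtain ⟨m, rfl⟩ : ∃ m, n = m + 5 := ⟨n - 5, by omega⟩
  simp only [gam, rr, map_neg, map_ofNat]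
  rw [show m+5-1 = m+4 from by omega, show m+5-2 = m+3 from by omega]
  ring

lemma gam_decomp (hn5 : 5 ≤ n) :
    gam n = X^(n-2) * ((X-1)^2 * rr) + (X^n - 1) * (X^(n-2) * (X+1) - gam n) := by
  obtain ⟨m, rfl⟩ : ∃ m, n = m + 5 := ⟨n - 5, by omega⟩
  simp only [gam, rr, map_neg, map_ofNat]
  rw [show m+5-1 = m+4 from by omega, show m+5-2 = m+3 from by omega]
  ring

lemma key_iff (hn5 : 5 ≤ n) (f : ℤ[X]) :
    (X - 1) * f ∈ Ideal.span {gam n, X^n - (1:ℤ[X])} ↔ f ∈ Jid n := by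
  have hs : ((X:ℤ[X]) - 1) * ss n = X^n - 1 := by
    have := geom_sum_mul (X:ℤ[X]) n
    rw [ss]; linear_combination this
  have hgd := gam_decomp n hn5
  have hq := I1 n hn5
  have hne : ((X:ℤ[X]) - 1) ≠ 0 := by
    have := X_sub_C_ne_zero (1:ℤ)
    rwa [map_one] at this
  constructor
  · intro h
    obtain ⟨a, b, hab⟩ := Ideal.mem_span_pair.1 h
    refine Ideal.mem_span_pair.2 ⟨a * X^(n-2),
      a*(X^(n-2)*(X+1) - gam n) + b, ?_⟩
    apply mul_left_cancel₀ hne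
    calc (X - 1) * (a * X^(n-2) * ((X-1)*rr) + (a*(X^(n-2)*(X+1) - gam n) + b) * ss n)
        = a * (X^(n-2) * ((X-1)^2 * rr) + (X^n - 1) * (X^(n-2) * (X+1) - gam n))
          + b * (X^n-1)
          + (a*(X^(n-2)*(X+1) - gam n) + b) * ((X - 1) * ss n - (X^n - 1)) := by ring
      _ = (X - 1) * f := by rw [hs, ← hgd]; rw [sub_self, mul_zero, add_zero, hab]
  · intro h
    obtain ⟨A, B, hAB⟩ := Ideal.mem_span_pair.1 h
    refine Ideal.mem_span_pair.2 ⟨A * X^2, B - A*(X+1), ?_⟩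
    calc A * X^2 * gam n + (B - A*(X+1)) * (X^n - 1)
        = A * ((X:ℤ[X])^2 * gam n - ((X-1)^2 * rr + (X^n - 1) * (X + 1)))
          + (A * ((X-1)*rr) + B * ss n) * (X-1)
          + B * ((X^n - 1) - (X-1) * ss n) := by ring
      _ = (X - 1) * f := by rw [hq, sub_self, mul_zero, hs, sub_self, mul_zero,
            zero_add, add_zero, hAB, mul_comm]

lemma piW_Xonly : piW n X = AddMonoidAlgebra.single (1 : ZMod n) (1:ℤ) := by
  rw [piW, aeval_X, uu]

lemma cW_explicit (hn5 : 5 ≤ n) : cW n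
    = AddMonoidAlgebra.single (0:ZMod n) (-4) + AddMonoidAlgebra.single 1 1
      + AddMonoidAlgebra.single 2 1 + AddMonoidAlgebra.single (-1) 1
      + AddMonoidAlgebra.single (-2) 1 := by
  have hc1 : ((n-1 : ℕ) : ZMod n) = -1 := by
    rw [Nat.cast_sub (by omega : 1 ≤ n), ZMod.natCast_self, Nat.cast_one, zero_sub]
  have hc2 : ((n-2 : ℕ) : ZMod n) = -2 := by
    rw [Nat.cast_sub (by omega : 2 ≤ n), ZMod.natCast_self, zero_sub]
    norm_num
  rw [cW, gam, map_add, map_add, map_add, map_add, piW_C, piW_Xonly,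
    piW_X_pow, piW_X_pow, piW_X_pow, hc1, hc2]
  norm_num

lemma colW (hn5 : 5 ≤ n) (v : ZMod n) :
    eF n (AddMonoidAlgebra.single v 1 * cW n) = circLap n v := by
  have hcast : ∀ k : ℕ, 0 < k → k < n → ((k : ℕ) : ZMod n) ≠ 0 := by
    intro k hk hkn h
    have hd := (ZMod.natCast_eq_zero_iff k n).1 h
    have := Nat.le_of_dvd hk hd
    omega
  have f10 : (1 : ZMod n) ≠ 0 := by
    have := hcast 1 (by norm_num) (by omega); exact_mod_cast this
  have f20 : (2 : ZMod n) ≠ 0 := by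
    have := hcast 2 (by norm_num) (by omega); exact_mod_cast this
  have f30 : (3 : ZMod n) ≠ 0 := by
    have := hcast 3 (by norm_num) (by omega); exact_mod_cast this
  have f40 : (4 : ZMod n) ≠ 0 := by
    have := hcast 4 (by norm_num) (by omega); exact_mod_cast this
  have fm10 : (-1 : ZMod n) ≠ 0 := fun h => f10 (by linear_combination -h)
  have fm20 : (-2 : ZMod n) ≠ 0 := fun h => f20 (by linear_combination -h)
  have f01 : (0 : ZMod n) ≠ 1 := fun h => f10 h.symm
  have f21 : (2 : ZMod n) ≠ 1 := fun h => f10 (by linear_combination h)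
  have fm11 : (-1 : ZMod n) ≠ 1 := fun h => f20 (by linear_combination -h)
  have fm21 : (-2 : ZMod n) ≠ 1 := fun h => f30 (by linear_combination -h)
  have f0m1 : (0 : ZMod n) ≠ -1 := fun h => fm10 h.symm
  have f1m1 : (1 : ZMod n) ≠ -1 := fun h => f20 (by linear_combination h)
  have f2m1 : (2 : ZMod n) ≠ -1 := fun h => f30 (by linear_combination h)
  have fm2m1 : (-2 : ZMod n) ≠ -1 := fun h => f10 (by linear_combination -h)
  have f02 : (0 : ZMod n) ≠ 2 := fun h => f20 h.symm
  have f12 : (1 : ZMod n) ≠ 2 := fun h => f10 (by linear_combination -h)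
  have fm12 : (-1 : ZMod n) ≠ 2 := fun h => f30 (by linear_combination -h)
  have fm22 : (-2 : ZMod n) ≠ 2 := fun h => f40 (by linear_combination -h)
  have f0m2 : (0 : ZMod n) ≠ -2 := fun h => fm20 h.symm
  have f1m2 : (1 : ZMod n) ≠ -2 := fun h => f30 (by linear_combination h)
  have f2m2 : (2 : ZMod n) ≠ -2 := fun h => f40 (by linear_combination h)
  have fm1m2 : (-1 : ZMod n) ≠ -2 := fun h => f10 (by linear_combination h)
  have main : ∀ d : ZMod n,
      ((if v + 0 = v + d then (-4:ℤ) else 0) + (if v + 1 = v + d then (1:ℤ) else 0)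
        + (if v + 2 = v + d then (1:ℤ) else 0) + (if v + -1 = v + d then (1:ℤ) else 0)
        + (if v + -2 = v + d then (1:ℤ) else 0)) = circLap n v (v + d) := by
    intro d
    rw [circLap]
    simp only [add_right_inj, add_eq_left, add_sub_cancel_left]
    by_cases h0 : d = 0
    · subst h0; simp [f10, f20, fm10, fm20]
    by_cases hp1 : d = 1
    · subst hp1; simp [f10, f01, f21, fm11, fm21]
    by_cases hm1 : d = -1
    · subst hm1; simp [fm10, f0m1, f1m1, f2m1, fm2m1, fm11]
    by_cases hp2 : d = 2
    · subst hp2; simp [f20, f02, f12, fm12, fm22, f21, f2m1]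
    by_cases hm2 : d = -2
    · subst hm2; simp [fm20, f0m2, f1m2, f2m2, fm1m2, fm21, fm2m1, fm22]
    · simp [h0, hp1, hm1, hp2, hm2, Ne.symm h0, Ne.symm hp1, Ne.symm hm1,
        Ne.symm hp2, Ne.symm hm2]
  funext w
  rw [cW_explicit n hn5, mul_add, mul_add, mul_add, mul_add,
    AddMonoidAlgebra.single_mul_single, AddMonoidAlgebra.single_mul_single,
    AddMonoidAlgebra.single_mul_single, AddMonoidAlgebra.single_mul_single,
    AddMonoidAlgebra.single_mul_single, map_add, map_add, map_add, map_add]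
  simp only [Pi.add_apply, eF_single, one_mul, mul_one]
  have hv : v + (w - v) = w := by ring
  have hmain := main (w - v)
  rw [hv] at hmain
  exact hmain

end Structure


section Theta

variable (n : ℕ) [NeZero n]

lemma mem_circD (δ : ZMod n → ℤ) : δ ∈ circD n ↔ ∑ v, δ v = 0 := Iff.rfl

lemma closure_eq (hn5 : 5 ≤ n) :
    AddSubgroup.closure (Set.range (circLap n))
      = AddSubgroup.map (eF n).toAddMonoidHom
          (Submodule.toAddSubgroup (Ideal.span {cW n})) := by
  apply le_antisymm
  · rw [AddSubgroup.closure_le]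
    rintro x ⟨v, rfl⟩
    rw [SetLike.mem_coe, AddSubgroup.mem_map]
    exact ⟨AddMonoidAlgebra.single v 1 * cW n,
      Ideal.mem_span_singleton'.2 ⟨AddMonoidAlgebra.single v 1, rfl⟩,
      colW n hn5 v⟩
  · have hall : ∀ h : Wn n, (eF n) (h * cW n)
        ∈ AddSubgroup.closure (Set.range (circLap n)) := by
      intro h
      induction h using AddMonoidAlgebra.induction_linear with
      | zero =>
        rw [zero_mul, map_zero]
        exact zero_mem _
      | add f g hf hg =>
        rw [add_mul, map_add]
        exact add_mem hf hg
      | single a b =>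
        have hs1 : (AddMonoidAlgebra.single a b : Wn n) = b • (AddMonoidAlgebra.single a 1 : Wn n) := by
          rw [AddMonoidAlgebra.smul_single, smul_eq_mul, mul_one]
        rw [hs1, smul_mul_assoc, map_zsmul, colW n hn5 a]
        exact AddSubgroup.zsmul_mem _ (AddSubgroup.subset_closure (Set.mem_range_self a)) b
    rintro x hx
    rw [AddSubgroup.mem_map] at hx
    obtain ⟨y, hy, rfl⟩ := hx
    obtain ⟨h, rfl⟩ := Ideal.mem_span_singleton'.1 hy
    exact hall h

lemma mem_closure_iff (hn5 : 5 ≤ n) (g : ℤ[X]) :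
    eF n (piW n g) ∈ AddSubgroup.closure (Set.range (circLap n))
      ↔ g ∈ Ideal.span {gam n, X^n - (1:ℤ[X])} := by
  rw [closure_eq n hn5, AddSubgroup.mem_map]
  constructor
  · rintro ⟨y, hy, hey⟩
    have hy2 : y = piW n g := (eF n).injective hey
    subst hy2
    obtain ⟨a, ha⟩ := Ideal.mem_span_singleton'.1 hy
    obtain ⟨h, rfl⟩ := piW_surjective n a
    have hz : piW n (g - h * gam n) = 0 := by
      rw [map_sub, map_mul]
      rw [show piW n (gam n) = cW n from rfl, ha, sub_self]
    obtain ⟨c, hc⟩ := Ideal.mem_span_singleton.1 ((ker_piW n _).1 hz)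
    refine Ideal.mem_span_pair.2 ⟨h, c, ?_⟩
    linear_combination -hc
  · intro hg
    obtain ⟨a, b, hab⟩ := Ideal.mem_span_pair.1 hg
    refine ⟨piW n g, ?_, rfl⟩
    refine Ideal.mem_span_singleton'.2 ⟨piW n a, ?_⟩
    have := congrArg (piW n) hab
    rw [map_add, map_mul, map_mul, piW_Xn_sub_one, mul_zero, add_zero] at this
    exact this

noncomputable def Th : ℤ[X] →+ (circD n) where
  toFun f := ⟨eF n (piW n ((X - 1) * f)), by
    rw [mem_circD, sum_eF_piW]
    simp⟩
  map_zero' := Subtype.ext (by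
    show eF n (piW n ((X - 1) * 0)) = ((0 : circD n) : ZMod n → ℤ)
    rw [mul_zero, map_zero, map_zero]; rfl)
  map_add' a b := Subtype.ext (by
    show eF n (piW n ((X - 1) * (a + b))) = _
    rw [mul_add, map_add, map_add]; rfl)

noncomputable def ThQ : ℤ[X] →+ circK n :=
  (QuotientAddGroup.mk' ((AddSubgroup.closure (Set.range (circLap n))).addSubgroupOf (circD n))).comp (Th n)

lemma sum_range_cast (δ : ZMod n → ℤ) :
    ∑ i ∈ Finset.range n, δ ((i : ℕ) : ZMod n) = ∑ v, δ v := by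
  apply Finset.sum_nbij' (fun i => ((i : ℕ) : ZMod n)) (fun v => v.val)
  · intro a _; exact Finset.mem_univ _
  · intro a _; exact Finset.mem_range.2 (ZMod.val_lt a)
  · intro a ha; exact ZMod.val_cast_of_lt (Finset.mem_range.1 ha)
  · intro a _; exact ZMod.natCast_rightInverse a
  · intro a _; rfl

lemma polyOf_eval_one (δ : ZMod n → ℤ) : (polyOf n δ).eval 1 = ∑ v, δ v := by
  rw [polyOf, eval_finset_sum]
  simp only [eval_mul, eval_C, eval_pow, eval_X, one_pow, mul_one]
  exact sum_range_cast n δ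

lemma ThQ_surjective : Function.Surjective (ThQ n) := by
  intro y
  obtain ⟨⟨δ, hδ⟩, rfl⟩ := QuotientAddGroup.mk'_surjective _ y
  have hroot : (X - C (1:ℤ)) ∣ polyOf n δ := by
    rw [dvd_iff_isRoot, IsRoot, polyOf_eval_one]
    exact (mem_circD n δ).1 hδ
  obtain ⟨f, hf⟩ := hroot
  refine ⟨f, congrArg _ (Subtype.ext ?_)⟩
  show eF n (piW n ((X - 1) * f)) = δ
  rw [show ((X:ℤ[X]) - 1) = X - C 1 by rw [map_one], ← hf, eF_piW_polyOf]

lemma ThQ_ker (hn5 : 5 ≤ n) (f : ℤ[X]) : ThQ n f = 0 ↔ f ∈ Jid n := by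
  rw [ThQ, AddMonoidHom.comp_apply]
  rw [show (QuotientAddGroup.mk' ((AddSubgroup.closure (Set.range (circLap n))).addSubgroupOf (circD n))) (Th n f)
    = ((Th n f : circD n) : circK n) from rfl]
  rw [QuotientAddGroup.eq_zero_iff, AddSubgroup.mem_addSubgroupOf]
  rw [show ((Th n f : circD n) : ZMod n → ℤ) = eF n (piW n ((X - 1) * f)) from rfl]
  rw [mem_closure_iff n hn5, key_iff n hn5]

end Theta


section Xi

variable (n F : ℕ) [NeZero n] [NeZero F]

noncomputable def Xi : ℤ[X] →+ ZMod F × ZMod F × ZMod n where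
  toFun f := (((redF F f) %ₘ rrF F).coeff 0, ((redF F f) %ₘ rrF F).coeff 1,
    ((f.eval 1 : ℤ) : ZMod n))
  map_zero' := by
    unfold redF
    simp
  map_add' a b := by
    unfold redF
    simp [Polynomial.map_add, add_modByMonic, coeff_add]

lemma Xi_apply (f : ℤ[X]) : Xi n F f = (((redF F f) %ₘ rrF F).coeff 0,
    ((redF F f) %ₘ rrF F).coeff 1, ((f.eval 1 : ℤ) : ZMod n)) := rfl

lemma rrF_degree [Nontrivial (ZMod F)] : (rrF F).degree = 2 := by
  unfold rrF
  compute_degree!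

lemma quad_zero [Nontrivial (ZMod F)] (p : (ZMod F)[X]) (hd : p.degree < 2)
    (h0 : p.coeff 0 = 0) (h1 : p.coeff 1 = 0) : p = 0 := by
  ext k
  rw [coeff_zero]
  match k with
  | 0 => exact h0
  | 1 => exact h1
  | (k+2) =>
    refine coeff_eq_zero_of_degree_lt (lt_of_lt_of_le hd ?_)
    exact_mod_cast (by omega : 2 ≤ k+2)

lemma Xi_eq_zero_iff [Nontrivial (ZMod F)] (f : ℤ[X]) :
    Xi n F f = 0 ↔ ((redF F f) %ₘ rrF F = 0 ∧ ((f.eval 1 : ℤ) : ZMod n) = 0) := by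
  rw [Xi_apply, Prod.ext_iff, Prod.ext_iff]
  constructor
  · rintro ⟨h1, h2, h3⟩
    refine ⟨?_, h3⟩
    refine quad_zero F _ ?_ h1 h2
    rw [← rrF_degree F]
    exact degree_modByMonic_lt _ (rrF_monic F)
  · rintro ⟨h1, h2⟩
    rw [h1]
    exact ⟨rfl, rfl, h2⟩

end Xi


lemma Xi_surjective (n F : ℕ) [NeZero n] [NeZero F] [Nontrivial (ZMod F)]
    (al be : ℤ) (hbez : (1:ℤ) = n * al + F * be) :
    Function.Surjective (Xi n F) := by
  rintro ⟨a, b, c⟩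
  obtain ⟨a', ha⟩ := ZMod.intCast_surjective a
  obtain ⟨b', hb⟩ := ZMod.intCast_surjective b
  obtain ⟨c', hc⟩ := ZMod.intCast_surjective c
  set f₁ : ℤ[X] := C a' + C b' * X with hf₁
  set f₂ : ℤ[X] := C c' with hf₂
  set u : ℤ[X] := C ((F:ℤ) * be) with hu
  set v : ℤ[X] := C ((n:ℤ) * al) with hv
  have huv : v + u = 1 := by
    rw [hu, hv, ← map_add, ← map_one (C : ℤ →+* ℤ[X])]
    congr 1
    linarith [hbez]
  have hfeq : f₁ + u * (f₂ - f₁) = f₂ + v * (f₁ - f₂) := by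
    linear_combination (f₂ - f₁) * huv
  refine ⟨f₁ + u * (f₂ - f₁), ?_⟩
  have mem1 : u * (f₂ - f₁) ∈ Ideal.span {rr, C ((F:ℕ):ℤ)} := by
    refine Ideal.mem_span_pair.2 ⟨0, C be * (f₂ - f₁), ?_⟩
    rw [hu, map_mul]
    ring
  have hm1 : redF F (u * (f₂ - f₁)) %ₘ rrF F = 0 := (memP1_iff F _).2 mem1
  have mem2 : v * (f₁ - f₂) ∈ P2 n := by
    show v * (f₁ - f₂) ∈ Ideal.span {X - 1, C ((n:ℕ):ℤ)}
    refine Ideal.mem_span_pair.2 ⟨0, C al * (f₁ - f₂), ?_⟩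
    rw [hv, map_mul]
    ring
  have hm2 : (((v * (f₁ - f₂)).eval 1 : ℤ) : ZMod n) = 0 := (memP2_iff n _).2 mem2
  have hXif1 : Xi n F f₁ = (a, b, ((f₁.eval 1 : ℤ) : ZMod n)) := by
    rw [Xi_apply]
    have hred : redF F f₁ = C ((a' : ZMod F)) + C ((b' : ZMod F)) * X := by
      rw [hf₁]
      unfold redF
      simp [Polynomial.map_add, Polynomial.map_mul, Polynomial.map_C, Polynomial.map_X]
    have hdeg : (redF F f₁).degree < (rrF F).degree := by
      rw [hred, rrF_degree F]
      have h1 : (C ((a' : ZMod F)) + C ((b' : ZMod F)) * X).degree ≤ 1 := by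
        compute_degree
      exact lt_of_le_of_lt h1 (by norm_num)
    have hmod : redF F f₁ %ₘ rrF F = redF F f₁ :=
      (modByMonic_eq_self_iff (rrF_monic F)).2 hdeg
    rw [hmod, hred]
    simp only [coeff_add, coeff_C, coeff_C_mul, coeff_X_zero, coeff_X_one]
    norm_num [ha, hb]
  have hXif2 : ((f₂.eval 1 : ℤ) : ZMod n) = c := by
    rw [hf₂, eval_C, hc]
  have e1 : Xi n F (f₁ + u * (f₂ - f₁)) = Xi n F f₁ + Xi n F (u * (f₂ - f₁)) :=
    map_add _ _ _
  have e2 : Xi n F (f₁ + u * (f₂ - f₁)) = Xi n F f₂ + Xi n F (v * (f₁ - f₂)) := by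
    rw [hfeq]; exact map_add _ _ _
  have hp1 : (Xi n F (u * (f₂ - f₁))).1 = 0 := by
    rw [Xi_apply, hm1]; simp
  have hp2 : (Xi n F (u * (f₂ - f₁))).2.1 = 0 := by
    rw [Xi_apply, hm1]; simp
  have hp3 : (Xi n F (v * (f₁ - f₂))).2.2 = 0 := by
    rw [Xi_apply]; exact hm2
  refine Prod.ext ?_ (Prod.ext ?_ ?_)
  · rw [e1, Prod.fst_add, hp1, hXif1, add_zero]
  · rw [e1, Prod.snd_add, Prod.fst_add, hp2, hXif1, add_zero]
  · rw [e2, Prod.snd_add, Prod.snd_add, hp3, add_zero, Xi_apply, hXif2]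


end CircAux


/-- For odd n ≥ 5 with gcd(n, F_n) = 1, the critical group of C_n^{1,2}
is (ℤ/F_nℤ) × (ℤ/F_nℤ) × (ℤ/nℤ). -/
theorem circulant_jacobian (n : ℕ) [NeZero n] (hn : 5 ≤ n) (hodd : Odd n)
    (hgcd : Nat.gcd n (Nat.fib n) = 1) :
    Nonempty (circK n ≃+ (ZMod (Nat.fib n) × ZMod (Nat.fib n) × ZMod n)) := by
  classical
  have hfib5 : 5 ≤ Nat.fib n := by
    have h5 : Nat.fib 5 = 5 := by decide
    have := Nat.fib_mono hn
    omega
  haveI : NeZero (Nat.fib n) := ⟨by omega⟩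
  haveI : Fact (1 < Nat.fib n) := ⟨by omega⟩
  have hbez : (1:ℤ) = n * Int.gcdA n (Nat.fib n) + (Nat.fib n) * Int.gcdB n (Nat.fib n) := by
    have := Int.gcd_eq_gcd_ab (n : ℤ) (Nat.fib n : ℤ)
    rw [Int.gcd_natCast_natCast, hgcd] at this
    exact_mod_cast this
  have hXiker : ∀ f : Polynomial ℤ, CircAux.Xi n (Nat.fib n) f = 0 ↔ f ∈ CircAux.Jid n := by
    intro f
    rw [CircAux.Xi_eq_zero_iff, CircAux.memP1_iff, CircAux.memP2_iff,
      CircAux.J_eq n (by omega) hgcd, Submodule.mem_inf]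
    rfl
  have hker_eq : (CircAux.ThQ n).ker = (CircAux.Xi n (Nat.fib n)).ker := by
    ext f
    rw [AddMonoidHom.mem_ker, AddMonoidHom.mem_ker, CircAux.ThQ_ker n hn f, hXiker f]
  have e1 := QuotientAddGroup.quotientKerEquivOfSurjective _ (CircAux.ThQ_surjective n)
  have e2 := QuotientAddGroup.quotientAddEquivOfEq hker_eq
  have e3 := QuotientAddGroup.quotientKerEquivOfSurjective _
    (CircAux.Xi_surjective n (Nat.fib n) _ _ hbez)
  exact ⟨e1.symm.trans (e2.trans e3)⟩
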